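/- In a directed graph, let d(a,b) denote the length of a shortest directed walk from a to b in the concatenated graph G ∘ G' (G followed by its transpose with outputs identified), where every walk from a to b' decomposes as a walk from a to some output node z followed by the reverse of a walk from b to z. Then (d(a,a') + d(b,b'))/2 ≤ d(a,b'). -/
import Mathlib

/-- `HasWalk E n a b` means there is a directed walk of length `n` from `a`
to `b` along the edge relation `E`. -/
def HasWalk {V : Type*} (E : V → V → Prop) : ℕ → V → V → Prop
  | 0, a, b => a = b
  | n + 1, a, b => ∃ c, E a c ∧ HasWalk E n c b

/-- Shortest path inequality in `Γ ∘ Γ'`: a walk from `a` to `b'` in the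
concatenation of a graph with its transpose decomposes as a walk `a → z` plus
the reverse of a walk `b → z` for some output node `z ∈ Z`.  If `daa`, `dbb`,
`dab` are the shortest such combined lengths for the pairs `(a,a')`, `(b,b')`,
`(a,b')` respectively, then `(daa + dbb)/2 ≤ dab`. -/
theorem shortest_path_coherence_ineq {V : Type*} (E : V → V → Prop)
    (Z : Set V) (a b : V) (daa dbb dab : ℕ)
    (hdaa_min : ∀ n m z, z ∈ Z → HasWalk E n a z → HasWalk E m a z →
      daa ≤ n + m)
    (hdbb_min : ∀ n m z, z ∈ Z → HasWalk E n b z → HasWalk E m b z →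
      dbb ≤ n + m)
    (hdab : ∃ n m z, z ∈ Z ∧ HasWalk E n a z ∧ HasWalk E m b z ∧
      n + m = dab) :
    daa + dbb ≤ 2 * dab := by
  obtain ⟨n, m, z, hz, ha, hb, hnm⟩ := hdab
  have h1 := hdaa_min n n z hz ha ha
  have h2 := hdbb_min m m z hz hb hb
  omega
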